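/- Let Φ ∈ ℝ^{M×2N} satisfy the joint RIP with constant σ_{2K}. Let h ∈ ℝ^{2N}, let T₀₁ ⊆ {1,…,N} with |T₀₁| ≤ 2K, decomposed as T₀ ∪ T₁ with disjoint |T₀|, |T₁| ≤ K, and let T₂, T₃, … partition T₀₁ᶜ into sets of size ≤ K. Then ⟨Φh, Φh_{T₀₁}⟩ ≥ (1-σ_{2K})‖h_{T₀₁}‖₂² - √2 σ_{2K} ‖h_{T₀₁}‖₂ Σ_{j≥2}‖h_{T_j}‖₂. -/

import Mathlib

open scoped BigOperators
open Finset

/-- Euclidean norm of a finite-dimensional real vector. -/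
noncomputable def l2 {ι : Type*} [Fintype ι] (x : ι → ℝ) : ℝ :=
  Real.sqrt (∑ j, x j ^ 2)

/-- Euclidean inner product. -/
noncomputable def dot {ι : Type*} [Fintype ι] (x y : ι → ℝ) : ℝ := ∑ j, x j * y j

/-- Joint magnitude of the `i`-th pair of a vector in `ℝ^{2N}`. -/
noncomputable def jmag {N : ℕ} (x : Fin N ⊕ Fin N → ℝ) (i : Fin N) : ℝ :=
  Real.sqrt (x (Sum.inl i) ^ 2 + x (Sum.inr i) ^ 2)

/-- Mixed ℓ₂/ℓ₁ norm `‖x‖_{2,1}`. -/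
noncomputable def n21 {N : ℕ} (x : Fin N ⊕ Fin N → ℝ) : ℝ := ∑ i, jmag x i

/-- Mixed ℓ_∞/ℓ₁ norm `‖x‖_{∞,1}`. -/
noncomputable def ninf1 {N : ℕ} (x : Fin N ⊕ Fin N → ℝ) : ℝ := ⨆ i, jmag x i

open Classical in
/-- Joint support of a vector in `ℝ^{2N}`. -/
noncomputable def jsupp {N : ℕ} (x : Fin N ⊕ Fin N → ℝ) : Finset (Fin N) :=
  Finset.univ.filter (fun i => x (Sum.inl i) ≠ 0 ∨ x (Sum.inr i) ≠ 0)

/-- Restriction of `x` to the joint-index set `T` (zeroing other pairs). -/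
noncomputable def rT {N : ℕ} (T : Finset (Fin N)) (x : Fin N ⊕ Fin N → ℝ) :
    Fin N ⊕ Fin N → ℝ := fun j => if Sum.elim id id j ∈ T then x j else 0

/-- Joint restricted isometry property with sparsity level `S` and constant `σ`. -/
def JRIP {M N : ℕ} (Φ : Matrix (Fin M) (Fin N ⊕ Fin N) ℝ) (S : ℕ) (σ : ℝ) : Prop :=
  ∀ v : Fin N ⊕ Fin N → ℝ, (jsupp v).card ≤ S →
    (1 - σ) * l2 v ^ 2 ≤ l2 (Φ.mulVec v) ^ 2 ∧ l2 (Φ.mulVec v) ^ 2 ≤ (1 + σ) * l2 v ^ 2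

section helpers
variable {ι : Type*} [Fintype ι]

lemma l2_nonneg (x : ι → ℝ) : 0 ≤ l2 x := Real.sqrt_nonneg _

lemma l2_sq (x : ι → ℝ) : l2 x ^ 2 = ∑ j, x j ^ 2 :=
  Real.sq_sqrt (Finset.sum_nonneg fun j _ => sq_nonneg _)

lemma l2_eq_zero {x : ι → ℝ} (hx : l2 x = 0) : x = 0 := by
  have h2 : ∑ j, x j ^ 2 = 0 := by
    have := l2_sq x; rw [hx] at this; linarith
  funext j
  have := (Finset.sum_eq_zero_iff_of_nonneg (fun j _ => sq_nonneg (x j))).mp h2 j (mem_univ j)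
  exact pow_eq_zero_iff (by norm_num) |>.mp this

lemma dot_self (x : ι → ℝ) : dot x x = l2 x ^ 2 := by
  rw [l2_sq]; exact Finset.sum_congr rfl fun j _ => (sq (x j)).symm

lemma l2_smul (c : ℝ) (x : ι → ℝ) : l2 (c • x) = |c| * l2 x := by
  unfold l2
  rw [← Real.sqrt_sq_eq_abs, ← Real.sqrt_mul (sq_nonneg c), Finset.mul_sum]
  congr 1; exact Finset.sum_congr rfl fun j _ => by simp [mul_pow]

lemma l2_add_sq (x y : ι → ℝ) :
    l2 (x + y) ^ 2 = l2 x ^ 2 + 2 * dot x y + l2 y ^ 2 := by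
  simp only [l2_sq, dot, Finset.mul_sum]
  rw [← Finset.sum_add_distrib, ← Finset.sum_add_distrib]
  exact Finset.sum_congr rfl fun j _ => by simp [Pi.add_apply]; ring

lemma l2_sub_sq (x y : ι → ℝ) :
    l2 (x - y) ^ 2 = l2 x ^ 2 - 2 * dot x y + l2 y ^ 2 := by
  simp only [l2_sq, dot, Finset.mul_sum]
  rw [← Finset.sum_sub_distrib, ← Finset.sum_add_distrib]
  exact Finset.sum_congr rfl fun j _ => by simp [Pi.sub_apply]; ring

lemma dot_sum_left {α : Type*} (F : Finset α) (x : α → ι → ℝ) (z : ι → ℝ) :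
    dot (∑ j ∈ F, x j) z = ∑ j ∈ F, dot (x j) z := by
  unfold dot
  rw [Finset.sum_comm]
  exact Finset.sum_congr rfl fun c _ => by rw [Finset.sum_apply, Finset.sum_mul]

lemma dot_add_left (x y z : ι → ℝ) : dot (x + y) z = dot x z + dot y z := by
  unfold dot; rw [← Finset.sum_add_distrib]
  exact Finset.sum_congr rfl fun j _ => by simp [Pi.add_apply]; ring

lemma dot_add_right (x y z : ι → ℝ) : dot x (y + z) = dot x y + dot x z := by
  unfold dot; rw [← Finset.sum_add_distrib]
  exact Finset.sum_congr rfl fun j _ => by simp [Pi.add_apply]; ring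

lemma dot_smul_smul (p q : ℝ) (x y : ι → ℝ) :
    dot (p • x) (q • y) = p * q * dot x y := by
  unfold dot; rw [Finset.mul_sum]
  exact Finset.sum_congr rfl fun j _ => by simp [Pi.smul_apply, smul_eq_mul]; ring

lemma l2_zero : l2 (0 : ι → ℝ) = 0 := by simp [l2]
end helpers

section jsupp
variable {N : ℕ}

lemma mem_jsupp {x : Fin N ⊕ Fin N → ℝ} {i : Fin N} :
    i ∈ jsupp x ↔ (x (Sum.inl i) ≠ 0 ∨ x (Sum.inr i) ≠ 0) := by
  simp [jsupp]

lemma jsupp_pair_zero {x : Fin N ⊕ Fin N → ℝ} {i : Fin N} (hi : i ∉ jsupp x) :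
    x (Sum.inl i) = 0 ∧ x (Sum.inr i) = 0 := by
  rw [mem_jsupp] at hi; push_neg at hi; exact hi

lemma jsupp_coord_zero {x : Fin N ⊕ Fin N → ℝ} {c : Fin N ⊕ Fin N}
    (hi : Sum.elim id id c ∉ jsupp x) : x c = 0 := by
  cases c with
  | inl i => exact (jsupp_pair_zero hi).1
  | inr i => exact (jsupp_pair_zero hi).2

lemma jsupp_add_subset (x y : Fin N ⊕ Fin N → ℝ) :
    jsupp (x + y) ⊆ jsupp x ∪ jsupp y := by
  intro i hi
  by_contra hc
  simp only [Finset.mem_union, not_or] at hc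
  have h1 := jsupp_pair_zero hc.1
  have h2 := jsupp_pair_zero hc.2
  rw [mem_jsupp] at hi
  simp [Pi.add_apply, h1.1, h1.2, h2.1, h2.2] at hi

lemma jsupp_sub_subset (x y : Fin N ⊕ Fin N → ℝ) :
    jsupp (x - y) ⊆ jsupp x ∪ jsupp y := by
  intro i hi
  by_contra hc
  simp only [Finset.mem_union, not_or] at hc
  have h1 := jsupp_pair_zero hc.1
  have h2 := jsupp_pair_zero hc.2
  rw [mem_jsupp] at hi
  simp [Pi.sub_apply, h1.1, h1.2, h2.1, h2.2] at hi

lemma jsupp_smul_subset (c : ℝ) (x : Fin N ⊕ Fin N → ℝ) :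
    jsupp (c • x) ⊆ jsupp x := by
  intro i hi
  rw [mem_jsupp] at hi ⊢
  rcases hi with hi | hi
  · left; intro hx; simp [Pi.smul_apply, hx] at hi
  · right; intro hx; simp [Pi.smul_apply, hx] at hi

lemma jsupp_rT_subset (T : Finset (Fin N)) (x : Fin N ⊕ Fin N → ℝ) :
    jsupp (rT T x) ⊆ T := by
  intro i hi
  rw [mem_jsupp] at hi
  by_contra hT
  simp [rT, hT] at hi

lemma dot_jdisj {u v : Fin N ⊕ Fin N → ℝ} (hd : Disjoint (jsupp u) (jsupp v)) :
    dot u v = 0 := by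
  apply Finset.sum_eq_zero; intro c _
  by_cases hu : u c = 0
  · simp [hu]
  · have hi : Sum.elim id id c ∈ jsupp u := by
      cases c with
      | inl i => exact mem_jsupp.mpr (Or.inl hu)
      | inr i => exact mem_jsupp.mpr (Or.inr hu)
    have hv : v c = 0 := jsupp_coord_zero (Finset.disjoint_left.mp hd hi)
    simp [hv]
end jsupp

lemma ip_bound {M N K : ℕ} (Φ : Matrix (Fin M) (Fin N ⊕ Fin N) ℝ) {σ : ℝ}
    (hRIP : JRIP Φ (2*K) σ) {u v : Fin N ⊕ Fin N → ℝ}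
    (hdisj : Disjoint (jsupp u) (jsupp v))
    (hu : (jsupp u).card ≤ K) (hv : (jsupp v).card ≤ K) :
    -(σ * l2 u * l2 v) ≤ dot (Φ.mulVec u) (Φ.mulVec v) := by
  have hz : l2 (0 : (Fin N ⊕ Fin N) → ℝ) = 0 := l2_zero
  by_cases hu0 : l2 u = 0
  · have h0 : u = 0 := l2_eq_zero hu0
    simp [h0, hz, Matrix.mulVec_zero, dot]
  by_cases hv0 : l2 v = 0
  · have h0 : v = 0 := l2_eq_zero hv0
    simp [h0, hz, Matrix.mulVec_zero, dot]
  set a := l2 v • u with ha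
  set b := l2 u • v with hb
  set c := l2 u * l2 v with hcdef
  have hc : 0 < c := mul_pos (lt_of_le_of_ne (l2_nonneg u) (Ne.symm hu0))
    (lt_of_le_of_ne (l2_nonneg v) (Ne.symm hv0))
  have hab : Disjoint (jsupp a) (jsupp b) :=
    hdisj.mono (jsupp_smul_subset _ _) (jsupp_smul_subset _ _)
  have hdot0 : dot a b = 0 := dot_jdisj hab
  have hla : l2 a = c := by
    rw [ha, l2_smul, abs_of_nonneg (l2_nonneg v), hcdef]; ring
  have hlb : l2 b = c := by
    rw [hb, l2_smul, abs_of_nonneg (l2_nonneg u), hcdef]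
  have hcard : ∀ w : Fin N ⊕ Fin N → ℝ, jsupp w ⊆ jsupp a ∪ jsupp b → (jsupp w).card ≤ 2 * K := by
    intro w hw
    calc (jsupp w).card ≤ (jsupp a ∪ jsupp b).card := Finset.card_le_card hw
      _ ≤ (jsupp a).card + (jsupp b).card := Finset.card_union_le _ _
      _ ≤ K + K := add_le_add
          (le_trans (Finset.card_le_card (jsupp_smul_subset _ _)) hu)
          (le_trans (Finset.card_le_card (jsupp_smul_subset _ _)) hv)
      _ = 2 * K := by ring
  have hrip1 := (hRIP (a + b) (hcard _ (jsupp_add_subset a b))).1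
  have hrip2 := (hRIP (a - b) (hcard _ (jsupp_sub_subset a b))).2
  have e1 : l2 (a + b) ^ 2 = 2 * c ^ 2 := by
    rw [l2_add_sq, hdot0, hla, hlb]; ring
  have e2 : l2 (a - b) ^ 2 = 2 * c ^ 2 := by
    rw [l2_sub_sq, hdot0, hla, hlb]; ring
  have e3 : l2 (Φ.mulVec (a + b)) ^ 2
      = l2 (Φ.mulVec a) ^ 2 + 2 * dot (Φ.mulVec a) (Φ.mulVec b) + l2 (Φ.mulVec b) ^ 2 := by
    rw [Matrix.mulVec_add]; exact l2_add_sq _ _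
  have e4 : l2 (Φ.mulVec (a - b)) ^ 2
      = l2 (Φ.mulVec a) ^ 2 - 2 * dot (Φ.mulVec a) (Φ.mulVec b) + l2 (Φ.mulVec b) ^ 2 := by
    rw [Matrix.mulVec_sub]; exact l2_sub_sq _ _
  have e5 : dot (Φ.mulVec a) (Φ.mulVec b) = c * dot (Φ.mulVec u) (Φ.mulVec v) := by
    rw [ha, hb, Matrix.mulVec_smul, Matrix.mulVec_smul, dot_smul_smul, hcdef]; ring
  rw [e1, e3, e5] at hrip1
  rw [e2, e4, e5] at hrip2
  have key : c * (-(σ * c)) ≤ c * dot (Φ.mulVec u) (Φ.mulVec v) := by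
    have hq : c * (-(σ * c)) = -(σ * c ^ 2) := by ring
    rw [hq]
    linarith [hrip1, hrip2]
  have := (mul_le_mul_iff_right₀ hc).mp key
  calc -(σ * l2 u * l2 v) = -(σ * c) := by rw [hcdef]; ring
    _ ≤ _ := this

theorem stmt18 {M N K : ℕ} (Φ : Matrix (Fin M) (Fin N ⊕ Fin N) ℝ) (σ : ℝ)
    (hRIP : JRIP Φ (2 * K) σ)
    (h : Fin N ⊕ Fin N → ℝ) (T0 T1 : Finset (Fin N))
    (hd : Disjoint T0 T1) (h0 : T0.card ≤ K) (h1 : T1.card ≤ K)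
    (S : ℕ → Finset (Fin N))
    (hSd : ∀ i j, i ≠ j → Disjoint (S i) (S j))
    (hSsub : ∀ j, S j ⊆ (T0 ∪ T1)ᶜ)
    (hScard : ∀ j, (S j).card ≤ K)
    (hScover : ∀ i : Fin N, i ∉ T0 ∪ T1 → ∃ j, i ∈ S j) :
    (1 - σ) * l2 (rT (T0 ∪ T1) h) ^ 2 -
        Real.sqrt 2 * σ * l2 (rT (T0 ∪ T1) h) * ∑' j : ℕ, l2 (rT (S j) h) ≤
      dot (Φ.mulVec h) (Φ.mulVec (rT (T0 ∪ T1) h)) := by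
  classical
  -- trivial case N = 0
  rcases Nat.eq_zero_or_pos N with hN | hN
  · subst hN
    have hh : ∀ x : Fin 0 ⊕ Fin 0 → ℝ, l2 x = 0 := by
      intro x; simp [l2]
    have hm : ∀ x : Fin 0 ⊕ Fin 0 → ℝ, Φ.mulVec x = 0 := by
      intro x; funext m; simp [Matrix.mulVec, dotProduct]
    rw [hh, hm, hm]
    simp [dot]
  obtain ⟨i₀, hi₀⟩ : ∃ i : Fin N, True := ⟨⟨0, hN⟩, trivial⟩
  -- K ≥ 1
  have hK : 1 ≤ K := by
    by_contra hKc
    push_neg at hKc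
    interval_cases K
    have hT0 : T0 = ∅ := Finset.card_eq_zero.mp (Nat.le_zero.mp h0)
    have hT1 : T1 = ∅ := Finset.card_eq_zero.mp (Nat.le_zero.mp h1)
    obtain ⟨j, hj⟩ := hScover i₀ (by simp [hT0, hT1])
    have : S j = ∅ := Finset.card_eq_zero.mp (Nat.le_zero.mp (hScard j))
    simp [this] at hj
  -- σ ≥ 0
  have hσ : 0 ≤ σ := by
    set v : Fin N ⊕ Fin N → ℝ := fun c => if c = Sum.inl i₀ then 1 else 0 with hv
    have hsupp : jsupp v ⊆ {i₀} := by
      intro i hi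
      rw [mem_jsupp] at hi
      rcases hi with hi | hi
      · simp only [hv] at hi
        by_cases hii : i = i₀
        · simp [hii]
        · exfalso; apply hi; simp [Sum.inl.injEq, hii]
      · exfalso; apply hi; simp [hv]
    have hcardv : (jsupp v).card ≤ 2 * K :=
      le_trans (Finset.card_le_card hsupp) (by simp; omega)
    have hl2v : l2 v ^ 2 = 1 := by
      rw [l2_sq]
      rw [Finset.sum_eq_single (Sum.inl i₀)]
      · simp [hv]
      · intro c _ hc; simp [hv, hc]
      · intro hc; exact absurd (Finset.mem_univ _) hc
    obtain ⟨hl, hr⟩ := hRIP v hcardv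
    rw [hl2v] at hl hr
    linarith
  -- notation
  set g := rT (T0 ∪ T1) h with hgdef
  -- indexing function for the cover
  have hjdx_ex : ∀ i : Fin N, i ∉ T0 ∪ T1 → ∃ j, i ∈ S j := hScover
  set jdx : Fin N → ℕ := fun i => if hi : i ∉ T0 ∪ T1 then Classical.choose (hScover i hi) else 0
    with hjdxdef
  have hjdx_mem : ∀ i : Fin N, ∀ hi : i ∉ T0 ∪ T1, i ∈ S (jdx i) := by
    intro i hi
    simp only [hjdxdef, dif_pos hi]
    exact Classical.choose_spec (hScover i hi)
  have huniq : ∀ i : Fin N, ∀ _ : i ∉ T0 ∪ T1, ∀ j, i ∈ S j → j = jdx i := by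
    intro i hi j hij
    by_contra hne
    exact Finset.disjoint_left.mp (hSd j (jdx i) hne) hij (hjdx_mem i hi)
  set F : Finset ℕ := ((T0 ∪ T1)ᶜ).image jdx with hFdef
  have hwzero : ∀ j ∉ F, rT (S j) h = 0 := by
    intro j hj
    funext c
    show (if Sum.elim id id c ∈ S j then h c else 0) = 0
    by_cases hc : Sum.elim id id c ∈ S j
    · exfalso
      have hiT : Sum.elim id id c ∉ T0 ∪ T1 := by
        have := hSsub j hc
        simpa [Finset.mem_compl] using this
      have hje : j = jdx (Sum.elim id id c) := huniq _ hiT j hc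
      apply hj
      rw [hFdef, hje]
      exact Finset.mem_image_of_mem jdx (Finset.mem_compl.mpr hiT)
    · simp [hc]
  have htsum : ∑' j : ℕ, l2 (rT (S j) h) = ∑ j ∈ F, l2 (rT (S j) h) := by
    apply tsum_eq_sum
    intro j hj
    rw [hwzero j hj, l2_zero]
  -- decomposition h = g + ∑_{j ∈ F} rT (S j) h
  have hdecomp : h = g + ∑ j ∈ F, rT (S j) h := by
    funext c
    simp only [Pi.add_apply, Finset.sum_apply]
    by_cases hiT : Sum.elim id id c ∈ T0 ∪ T1
    · have hterm : ∀ j ∈ F, rT (S j) h c = 0 := by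
        intro j _
        have hns : Sum.elim id id c ∉ S j := by
          intro hmem
          have := hSsub j hmem
          rw [Finset.mem_compl] at this
          exact this hiT
        show (if Sum.elim id id c ∈ S j then h c else 0) = 0
        simp [hns]
      rw [Finset.sum_eq_zero hterm]
      show h c = (if Sum.elim id id c ∈ T0 ∪ T1 then h c else 0) + 0
      simp [hiT]
    · have hgc : g c = 0 := by
        show (if Sum.elim id id c ∈ T0 ∪ T1 then h c else 0) = 0
        simp [hiT]
      rw [hgc, zero_add]
      have hjF : jdx (Sum.elim id id c) ∈ F :=
        Finset.mem_image_of_mem jdx (Finset.mem_compl.mpr hiT)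
      rw [Finset.sum_eq_single (jdx (Sum.elim id id c))]
      · show h c = (if Sum.elim id id c ∈ S (jdx (Sum.elim id id c)) then h c else 0)
        simp [hjdx_mem _ hiT]
      · intro j _ hne
        have hns : Sum.elim id id c ∉ S j := fun hmem => hne (huniq _ hiT j hmem)
        show (if Sum.elim id id c ∈ S j then h c else 0) = 0
        simp [hns]
      · intro hc; exact absurd hjF hc
  -- split of the main inner product
  have hmain : dot (Φ.mulVec h) (Φ.mulVec g)
      = dot (Φ.mulVec g) (Φ.mulVec g)
        + ∑ j ∈ F, dot (Φ.mulVec (rT (S j) h)) (Φ.mulVec g) := by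
    conv_lhs => rw [hdecomp]
    rw [Matrix.mulVec_add, dot_add_left]
    congr 1
    have hms : Φ.mulVec (∑ j ∈ F, rT (S j) h) = ∑ j ∈ F, Φ.mulVec (rT (S j) h) := by
      have hls := map_sum Φ.mulVecLin (fun j => rT (S j) h) F
      simp only [Matrix.mulVecLin_apply] at hls
      exact hls
    rw [hms, dot_sum_left]
  -- RIP lower bound on g
  have hgcard : (jsupp g).card ≤ 2 * K := by
    calc (jsupp g).card ≤ (T0 ∪ T1).card := Finset.card_le_card (jsupp_rT_subset _ _)
      _ ≤ T0.card + T1.card := Finset.card_union_le _ _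
      _ ≤ 2 * K := by omega
  have hging : (1 - σ) * l2 g ^ 2 ≤ dot (Φ.mulVec g) (Φ.mulVec g) := by
    rw [dot_self]; exact (hRIP g hgcard).1
  -- split g = u0 + u1
  have hgsplit : g = rT T0 h + rT T1 h := by
    funext c
    show (if Sum.elim id id c ∈ T0 ∪ T1 then h c else 0)
      = (if Sum.elim id id c ∈ T0 then h c else 0) + (if Sum.elim id id c ∈ T1 then h c else 0)
    by_cases h0c : Sum.elim id id c ∈ T0
    · have h1c : Sum.elim id id c ∉ T1 := Finset.disjoint_left.mp hd h0c
      simp [h0c, h1c]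
    · by_cases h1c : Sum.elim id id c ∈ T1
      · simp [h0c, h1c]
      · simp [h0c, h1c]
  have hdisj01 : Disjoint (jsupp (rT T0 h)) (jsupp (rT T1 h)) :=
    hd.mono (jsupp_rT_subset _ _) (jsupp_rT_subset _ _)
  have hpyth : l2 (rT T0 h) ^ 2 + l2 (rT T1 h) ^ 2 = l2 g ^ 2 := by
    rw [hgsplit, l2_add_sq, dot_jdisj hdisj01]; ring
  have hsum01 : l2 (rT T0 h) + l2 (rT T1 h) ≤ Real.sqrt 2 * l2 g := by
    apply le_of_pow_le_pow_left₀ two_ne_zero (mul_nonneg (Real.sqrt_nonneg 2) (l2_nonneg g))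
    have h2 : (Real.sqrt 2 * l2 g) ^ 2 = 2 * l2 g ^ 2 := by
      rw [mul_pow, Real.sq_sqrt (by norm_num : (0:ℝ) ≤ 2)]
    rw [h2, ← hpyth]
    nlinarith [sq_nonneg (l2 (rT T0 h) - l2 (rT T1 h))]
  -- per-j bound
  have hjbound : ∀ j ∈ F,
      -(Real.sqrt 2 * σ * l2 g * l2 (rT (S j) h))
        ≤ dot (Φ.mulVec (rT (S j) h)) (Φ.mulVec g) := by
    intro j _
    have hwcard : (jsupp (rT (S j) h)).card ≤ K :=
      le_trans (Finset.card_le_card (jsupp_rT_subset _ _)) (hScard j)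
    have hSdisjT : ∀ T : Finset (Fin N), T ⊆ T0 ∪ T1 → Disjoint (S j) T := by
      intro T hT
      rw [Finset.disjoint_left]
      intro i hiS hiT
      have := hSsub j hiS
      rw [Finset.mem_compl] at this
      exact this (hT hiT)
    have hd0 : Disjoint (jsupp (rT (S j) h)) (jsupp (rT T0 h)) :=
      (hSdisjT T0 Finset.subset_union_left).mono (jsupp_rT_subset _ _) (jsupp_rT_subset _ _)
    have hd1 : Disjoint (jsupp (rT (S j) h)) (jsupp (rT T1 h)) :=
      (hSdisjT T1 Finset.subset_union_right).mono (jsupp_rT_subset _ _) (jsupp_rT_subset _ _)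
    have h0card : (jsupp (rT T0 h)).card ≤ K :=
      le_trans (Finset.card_le_card (jsupp_rT_subset _ _)) h0
    have h1card : (jsupp (rT T1 h)).card ≤ K :=
      le_trans (Finset.card_le_card (jsupp_rT_subset _ _)) h1
    have b0 := ip_bound Φ hRIP hd0 hwcard h0card
    have b1 := ip_bound Φ hRIP hd1 hwcard h1card
    have hsplit : dot (Φ.mulVec (rT (S j) h)) (Φ.mulVec g)
        = dot (Φ.mulVec (rT (S j) h)) (Φ.mulVec (rT T0 h))
          + dot (Φ.mulVec (rT (S j) h)) (Φ.mulVec (rT T1 h)) := by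
      conv_lhs => rw [hgsplit]
      rw [Matrix.mulVec_add, dot_add_right]
    rw [hsplit]
    have hmono : σ * l2 (rT (S j) h) * (l2 (rT T0 h) + l2 (rT T1 h))
        ≤ σ * l2 (rT (S j) h) * (Real.sqrt 2 * l2 g) :=
      mul_le_mul_of_nonneg_left hsum01 (mul_nonneg hσ (l2_nonneg _))
    nlinarith [b0, b1, hmono]
  have hsum : -(Real.sqrt 2 * σ * l2 g * ∑ j ∈ F, l2 (rT (S j) h))
      ≤ ∑ j ∈ F, dot (Φ.mulVec (rT (S j) h)) (Φ.mulVec g) := by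
    have he : -(Real.sqrt 2 * σ * l2 g * ∑ j ∈ F, l2 (rT (S j) h))
        = ∑ j ∈ F, -(Real.sqrt 2 * σ * l2 g * l2 (rT (S j) h)) := by
      rw [Finset.mul_sum, ← Finset.sum_neg_distrib]
    rw [he]
    exact Finset.sum_le_sum hjbound
  rw [htsum, hmain]
  linarith [hging, hsum]
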